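/- (Gap analysis, Case 2: R12 ≥ R21, R13 ≥ R31, R23 ≤ R32.) Suppose the nonnegative rate tuple lies in C̲'_g and additionally R12 ≥ R21, R13 ≥ R31, R23 ≤ R32. Define α32^b = (2^{2R23+1}−1)/(2h3²P), α31^b = 2^{2R23+1}(2^{2R31+1}−1)/(2h3²P), α32^u = 2^{2R31+2R23+2}(2^{2(R32−R23)}−1)/(h3²P), α21^b = 2^{2R32+2R31+2}(2^{2R21+1}−1)/(2h2²P), α13^u = 2^{2R21+2R32+2R31+3}(2^{2(R13−R31)}−1)/(h1²P), α12^u = 2^{2R21+2R32+2R13+3}(2^{2(R12−R21)}−1)/(h1²P), and α23^b = (h3²/h2²)α32^b, α13^b = (h3²/h1²)α31^b, α12^b = (h2²/h1²)α21^b. Then α31^b+α32^b+α32^u ≤ 1, α21^b+α23^b ≤ 1, α12^b+α13^b+α12^u+α13^u ≤ 1, and (2^{2(R13+R23)}−1)/(h3²P) + 2^{2(R13+R23)}(2^{2(R12+R32−R23)}−1)/(h2²P) ≤ 1. -/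

import Mathlib

noncomputable def Cg (x : ℝ) : ℝ := (1 / 2) * Real.logb 2 (1 + x)

lemma exp_bound' {X R c : ℝ} (hX : 0 < X) (h : R ≤ Cg X - c) :
    (2:ℝ) ^ (2 * R + 2 * c) ≤ 1 + X := by
  have h1 : (0:ℝ) < 1 + X := by linarith
  have h2 : 2 * R + 2 * c ≤ Real.logb 2 (1 + X) := by
    unfold Cg at h; linarith
  calc (2:ℝ) ^ (2 * R + 2 * c) ≤ (2:ℝ) ^ (Real.logb 2 (1 + X)) :=
        Real.rpow_le_rpow_of_exponent_le one_le_two h2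
    _ = 1 + X := Real.rpow_logb two_pos (by norm_num) h1


set_option maxHeartbeats 2000000 in
theorem stmt_12
    (P h1 h2 h3 : ℝ) (hP : 0 < P)
    (hh12 : h2 ^ 2 ≤ h1 ^ 2) (hh23 : h3 ^ 2 ≤ h2 ^ 2) (hh3 : 0 < h3 ^ 2)
    (R12 R13 R21 R23 R31 R32 : ℝ)
    (hr12 : 0 ≤ R12) (hr13 : 0 ≤ R13) (hr21 : 0 ≤ R21)
    (hr23 : 0 ≤ R23) (hr31 : 0 ≤ R31) (hr32 : 0 ≤ R32)
    (hG1 : R31 + R32 ≤ Cg (h3 ^ 2 * P) - 2)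
    (hG2 : R13 + R23 ≤ Cg (h3 ^ 2 * P) - 2)
    (hG3 : R12 + R13 + R32 ≤ Cg (h2 ^ 2 * P + h3 ^ 2 * P) - 3)
    (hG4 : R13 + R23 + R12 ≤ Cg (h2 ^ 2 * P + h3 ^ 2 * P) - 3)
    (hG5 : R12 + R31 + R32 ≤ Cg (h1 ^ 2 * P + h2 ^ 2 * P) - 3)
    (hG6 : R13 + R23 + R21 ≤ Cg (h1 ^ 2 * P + h3 ^ 2 * P) - 3)
    (hG7 : R21 + R31 + R23 ≤ Cg ((|h2| + |h3|) ^ 2 * P) - 7 / 2)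
    (hG8 : R21 + R31 + R32 ≤ Cg ((|h2| + |h3|) ^ 2 * P) - 7 / 2)
    (hc1 : R21 ≤ R12) (hc2 : R31 ≤ R13) (hc3 : R23 ≤ R32)
    (a32b a31b a32u a21b a13u a12u a23b a13b a12b : ℝ)
    (ha32b : a32b = ((2:ℝ) ^ (2 * R23 + 1) - 1) / (2 * h3 ^ 2 * P))
    (ha31b : a31b = (2:ℝ) ^ (2 * R23 + 1) * ((2:ℝ) ^ (2 * R31 + 1) - 1) / (2 * h3 ^ 2 * P))
    (ha32u : a32u = (2:ℝ) ^ (2 * R31 + 2 * R23 + 2) * ((2:ℝ) ^ (2 * (R32 - R23)) - 1) / (h3 ^ 2 * P))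
    (ha21b : a21b = (2:ℝ) ^ (2 * R32 + 2 * R31 + 2) * ((2:ℝ) ^ (2 * R21 + 1) - 1) / (2 * h2 ^ 2 * P))
    (ha13u : a13u = (2:ℝ) ^ (2 * R21 + 2 * R32 + 2 * R31 + 3) * ((2:ℝ) ^ (2 * (R13 - R31)) - 1) / (h1 ^ 2 * P))
    (ha12u : a12u = (2:ℝ) ^ (2 * R21 + 2 * R32 + 2 * R13 + 3) * ((2:ℝ) ^ (2 * (R12 - R21)) - 1) / (h1 ^ 2 * P))
    (ha23b : a23b = h3 ^ 2 / h2 ^ 2 * a32b)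
    (ha13b : a13b = h3 ^ 2 / h1 ^ 2 * a31b)
    (ha12b : a12b = h2 ^ 2 / h1 ^ 2 * a21b) :
    a31b + a32b + a32u ≤ 1 ∧
    a21b + a23b ≤ 1 ∧
    a12b + a13b + a12u + a13u ≤ 1 ∧
    ((2:ℝ) ^ (2 * (R13 + R23)) - 1) / (h3 ^ 2 * P)
      + (2:ℝ) ^ (2 * (R13 + R23)) * ((2:ℝ) ^ (2 * (R12 + R32 - R23)) - 1) / (h2 ^ 2 * P) ≤ 1 := by
  have key : ∀ a b : ℝ, (2:ℝ) ^ (a + b) = 2 ^ a * 2 ^ b := fun a b => Real.rpow_add two_pos a b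
  have keys : ∀ a b : ℝ, (2:ℝ) ^ (a - b) = 2 ^ a / 2 ^ b := fun a b => Real.rpow_sub two_pos a b
  have rp : ∀ r : ℝ, (0:ℝ) < (2:ℝ) ^ r := fun r => Real.rpow_pos_of_pos two_pos r
  have ol : ∀ r : ℝ, 0 ≤ r → (1:ℝ) ≤ (2:ℝ) ^ r := fun r hr => by
    simpa using Real.rpow_le_rpow_of_exponent_le one_le_two hr
  have hX3 : (0:ℝ) < h3 ^ 2 * P := mul_pos hh3 hP
  have hX2 : (0:ℝ) < h2 ^ 2 * P := mul_pos (lt_of_lt_of_le hh3 hh23) hP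
  have hX1 : (0:ℝ) < h1 ^ 2 * P := mul_pos (lt_of_lt_of_le hh3 (le_trans hh23 hh12)) hP
  have hPne : P ≠ 0 := ne_of_gt hP
  have h3ne : h3 ^ 2 ≠ 0 := ne_of_gt hh3
  have h2ne : h2 ^ 2 ≠ 0 := ne_of_gt (lt_of_lt_of_le hh3 hh23)
  have h1ne : h1 ^ 2 ≠ 0 := ne_of_gt (lt_of_lt_of_le hh3 (le_trans hh23 hh12))
  have hx23ne : (2:ℝ) ^ (2 * R23) ≠ 0 := ne_of_gt (rp _)
  have hx31ne : (2:ℝ) ^ (2 * R31) ≠ 0 := ne_of_gt (rp _)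
  have hx21ne : (2:ℝ) ^ (2 * R21) ≠ 0 := ne_of_gt (rp _)
  -- one_le facts
  have o12 : (1:ℝ) ≤ (2:ℝ) ^ (2 * R12) := ol _ (by linarith)
  have o13 : (1:ℝ) ≤ (2:ℝ) ^ (2 * R13) := ol _ (by linarith)
  have o21 : (1:ℝ) ≤ (2:ℝ) ^ (2 * R21) := ol _ (by linarith)
  have o23 : (1:ℝ) ≤ (2:ℝ) ^ (2 * R23) := ol _ (by linarith)
  have o31 : (1:ℝ) ≤ (2:ℝ) ^ (2 * R31) := ol _ (by linarith)
  have o32 : (1:ℝ) ≤ (2:ℝ) ^ (2 * R32) := ol _ (by linarith)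
  have m2332 : (2:ℝ) ^ (2 * R23) ≤ (2:ℝ) ^ (2 * R32) :=
    Real.rpow_le_rpow_of_exponent_le one_le_two (by linarith)
  -- exponent rewrites
  have e1 : (2:ℝ) ^ (2 * R23 + 1) = 2 * (2:ℝ) ^ (2 * R23) := by
    rw [key, Real.rpow_one]; ring
  have e2 : (2:ℝ) ^ (2 * R31 + 1) = 2 * (2:ℝ) ^ (2 * R31) := by
    rw [key, Real.rpow_one]; ring
  have e3 : (2:ℝ) ^ (2 * R31 + 2 * R23 + 2) = 4 * ((2:ℝ) ^ (2 * R31) * (2:ℝ) ^ (2 * R23)) := by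
    rw [show 2 * R31 + 2 * R23 + (2:ℝ) = 2 * R31 + (2 * R23 + (1 + 1)) by ring,
      key, key, key, Real.rpow_one]; ring
  have e4 : (2:ℝ) ^ (2 * (R32 - R23)) = (2:ℝ) ^ (2 * R32) / (2:ℝ) ^ (2 * R23) := by
    rw [show 2 * (R32 - R23) = 2 * R32 - 2 * R23 by ring, keys]
  have e5 : (2:ℝ) ^ (2 * R32 + 2 * R31 + 2) = 4 * ((2:ℝ) ^ (2 * R32) * (2:ℝ) ^ (2 * R31)) := by
    rw [show 2 * R32 + 2 * R31 + (2:ℝ) = 2 * R32 + (2 * R31 + (1 + 1)) by ring,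
      key, key, key, Real.rpow_one]; ring
  have e6 : (2:ℝ) ^ (2 * R21 + 1) = 2 * (2:ℝ) ^ (2 * R21) := by
    rw [key, Real.rpow_one]; ring
  have e7 : (2:ℝ) ^ (2 * R21 + 2 * R32 + 2 * R31 + 3)
      = 8 * ((2:ℝ) ^ (2 * R21) * (2:ℝ) ^ (2 * R32) * (2:ℝ) ^ (2 * R31)) := by
    rw [show 2 * R21 + 2 * R32 + 2 * R31 + (3:ℝ) = 2 * R21 + (2 * R32 + (2 * R31 + (1 + (1 + 1)))) by ring,
      key, key, key, key, key, Real.rpow_one]; ring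
  have e8 : (2:ℝ) ^ (2 * (R13 - R31)) = (2:ℝ) ^ (2 * R13) / (2:ℝ) ^ (2 * R31) := by
    rw [show 2 * (R13 - R31) = 2 * R13 - 2 * R31 by ring, keys]
  have e9 : (2:ℝ) ^ (2 * R21 + 2 * R32 + 2 * R13 + 3)
      = 8 * ((2:ℝ) ^ (2 * R21) * (2:ℝ) ^ (2 * R32) * (2:ℝ) ^ (2 * R13)) := by
    rw [show 2 * R21 + 2 * R32 + 2 * R13 + (3:ℝ) = 2 * R21 + (2 * R32 + (2 * R13 + (1 + (1 + 1)))) by ring,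
      key, key, key, key, key, Real.rpow_one]; ring
  have e10 : (2:ℝ) ^ (2 * (R12 - R21)) = (2:ℝ) ^ (2 * R12) / (2:ℝ) ^ (2 * R21) := by
    rw [show 2 * (R12 - R21) = 2 * R12 - 2 * R21 by ring, keys]
  have e11 : (2:ℝ) ^ (2 * (R13 + R23)) = (2:ℝ) ^ (2 * R13) * (2:ℝ) ^ (2 * R23) := by
    rw [show 2 * (R13 + R23) = 2 * R13 + 2 * R23 by ring, key]
  have e12 : (2:ℝ) ^ (2 * (R12 + R32 - R23)) = (2:ℝ) ^ (2 * R12) * (2:ℝ) ^ (2 * R32) / (2:ℝ) ^ (2 * R23) := by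
    rw [show 2 * (R12 + R32 - R23) = 2 * R12 + 2 * R32 - 2 * R23 by ring, keys, key]
  -- bounds from Cg constraints
  have B1 : 16 * ((2:ℝ) ^ (2 * R31) * (2:ℝ) ^ (2 * R32)) ≤ 1 + h3 ^ 2 * P := by
    have h := exp_bound' hX3 hG1
    rw [show 2 * (R31 + R32) + 2 * (2:ℝ) = 2 * R31 + (2 * R32 + (1 + (1 + (1 + 1)))) by ring,
      key, key, key, key, key, Real.rpow_one] at h
    linarith only [h]
  have B2 : 16 * ((2:ℝ) ^ (2 * R13) * (2:ℝ) ^ (2 * R23)) ≤ 1 + h3 ^ 2 * P := by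
    have h := exp_bound' hX3 hG2
    rw [show 2 * (R13 + R23) + 2 * (2:ℝ) = 2 * R13 + (2 * R23 + (1 + (1 + (1 + 1)))) by ring,
      key, key, key, key, key, Real.rpow_one] at h
    linarith only [h]
  have hX23 : (0:ℝ) < h2 ^ 2 * P + h3 ^ 2 * P := by linarith
  have B3 : 64 * ((2:ℝ) ^ (2 * R12) * (2:ℝ) ^ (2 * R13) * (2:ℝ) ^ (2 * R32))
      ≤ 1 + (h2 ^ 2 * P + h3 ^ 2 * P) := by
    have h := exp_bound' hX23 hG3
    rw [show 2 * (R12 + R13 + R32) + 2 * (3:ℝ)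
        = 2 * R12 + (2 * R13 + (2 * R32 + (1 + (1 + (1 + (1 + (1 + 1))))))) by ring,
      key, key, key, key, key, key, key, key, Real.rpow_one] at h
    linarith only [h]
  have h3ne0 : h3 ≠ 0 := fun h => by simp [h] at hh3
  have habs32 : |h3| ≤ |h2| := by
    rw [← Real.sqrt_sq_eq_abs, ← Real.sqrt_sq_eq_abs]
    exact Real.sqrt_le_sqrt hh23
  have habspos : (0:ℝ) < (|h2| + |h3|) ^ 2 * P := by
    have : (0:ℝ) < |h2| + |h3| :=
      lt_of_lt_of_le (abs_pos.mpr h3ne0) (le_add_of_nonneg_left (abs_nonneg h2))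
    exact mul_pos (pow_pos this 2) hP
  have habs4 : (|h2| + |h3|) ^ 2 ≤ 4 * h2 ^ 2 := by
    nlinarith only [abs_nonneg h2, abs_nonneg h3, sq_abs h2, sq_abs h3, hh23,
      mul_le_mul_of_nonneg_left habs32 (abs_nonneg h2)]
  have B8 : 128 * ((2:ℝ) ^ (2 * R21) * (2:ℝ) ^ (2 * R31) * (2:ℝ) ^ (2 * R32))
      ≤ 1 + 4 * (h2 ^ 2 * P) := by
    have h := exp_bound' habspos hG8
    rw [show 2 * (R21 + R31 + R32) + 2 * (7 / 2 : ℝ)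
        = 2 * R21 + (2 * R31 + (2 * R32 + (1 + (1 + (1 + (1 + (1 + (1 + 1)))))))) by ring,
      key, key, key, key, key, key, key, key, key, Real.rpow_one] at h
    have hle : (|h2| + |h3|) ^ 2 * P ≤ 4 * (h2 ^ 2 * P) := by
      nlinarith only [habs4, hP.le]
    linarith only [h, hle]
  refine ⟨?_, ?_, ?_, ?_⟩
  · -- claim 1
    have eq1 : a31b + a32b + a32u =
        (4 * ((2:ℝ) ^ (2 * R31) * (2:ℝ) ^ (2 * R32))
          - 2 * ((2:ℝ) ^ (2 * R31) * (2:ℝ) ^ (2 * R23)) - 1 / 2) / (h3 ^ 2 * P) := by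
      rw [ha31b, ha32b, ha32u, e1, e2, e3, e4]
      field_simp
      ring
    rw [eq1, div_le_one hX3]
    have pm : (1:ℝ) * 1 ≤ (2:ℝ) ^ (2 * R31) * (2:ℝ) ^ (2 * R23) :=
      mul_le_mul o31 o23 zero_le_one (by linarith only [o31])
    linarith only [B1, pm, hX3]
  · -- claim 2
    have eq2 : a21b + a23b =
        (4 * ((2:ℝ) ^ (2 * R32) * (2:ℝ) ^ (2 * R31)) * (2 * (2:ℝ) ^ (2 * R21) - 1)
          + (2 * (2:ℝ) ^ (2 * R23) - 1)) / (2 * (h2 ^ 2 * P)) := by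
      rw [ha23b, ha21b, ha32b, e1, e5, e6]
      field_simp
    rw [eq2, div_le_one (by linarith : (0:ℝ) < 2 * (h2 ^ 2 * P))]
    have p1 : (1:ℝ) ≤ (2:ℝ) ^ (2 * R31) * (2:ℝ) ^ (2 * R32) := by nlinarith only [o31, o32]
    have p2 : (2:ℝ) ^ (2 * R23) ≤ (2:ℝ) ^ (2 * R31) * (2:ℝ) ^ (2 * R32) := by
      nlinarith only [m2332, o31, rp (2 * R32)]
    linarith only [B8, p1, p2, hX2]
  · -- claim 3
    have eq3 : a12b + a13b + a12u + a13u =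
        (2 * ((2:ℝ) ^ (2 * R23) * (2:ℝ) ^ (2 * R31)) - (2:ℝ) ^ (2 * R23)
          + 8 * ((2:ℝ) ^ (2 * R12) * (2:ℝ) ^ (2 * R13) * (2:ℝ) ^ (2 * R32))
          - 4 * ((2:ℝ) ^ (2 * R21) * (2:ℝ) ^ (2 * R31) * (2:ℝ) ^ (2 * R32))
          - 2 * ((2:ℝ) ^ (2 * R31) * (2:ℝ) ^ (2 * R32))) / (h1 ^ 2 * P) := by
      rw [ha12b, ha21b, ha13b, ha31b, ha12u, ha13u, e1, e2, e5, e6, e7, e8, e9, e10]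
      field_simp
      have h2ne0 : h2 ≠ 0 := fun h => h2ne (by simp [h])
      field_simp
      ring
    rw [eq3, div_le_one hX1]
    have p4a : (1:ℝ) ≤ (2:ℝ) ^ (2 * R21) * (2:ℝ) ^ (2 * R31) := by nlinarith only [o21, o31]
    have p4 : (1:ℝ) ≤ (2:ℝ) ^ (2 * R21) * (2:ℝ) ^ (2 * R31) * (2:ℝ) ^ (2 * R32) := by
      nlinarith only [p4a, o32]
    have p5 : (2:ℝ) ^ (2 * R23) * (2:ℝ) ^ (2 * R31) ≤ (2:ℝ) ^ (2 * R31) * (2:ℝ) ^ (2 * R32) := by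
      nlinarith only [m2332, rp (2 * R31)]
    have hXle2 : h2 ^ 2 * P ≤ h1 ^ 2 * P := by nlinarith only [hh12, hP.le]
    have hXle3 : h3 ^ 2 * P ≤ h1 ^ 2 * P := by nlinarith only [hh23, hh12, hP.le]
    linarith only [B3, p4, p5, o23, hXle2, hXle3, hX1]
  · -- claim 4
    rw [e11, e12]
    have t1 : ((2:ℝ) ^ (2 * R13) * (2:ℝ) ^ (2 * R23) - 1) / (h3 ^ 2 * P) ≤ 1 / 16 := by
      rw [div_le_iff₀ hX3]
      linarith only [B2]
    have t2 : (2:ℝ) ^ (2 * R13) * (2:ℝ) ^ (2 * R23)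
        * ((2:ℝ) ^ (2 * R12) * (2:ℝ) ^ (2 * R32) / (2:ℝ) ^ (2 * R23) - 1) / (h2 ^ 2 * P)
        ≤ 15 / 16 := by
      rw [div_le_iff₀ hX2]
      have expand : (2:ℝ) ^ (2 * R13) * (2:ℝ) ^ (2 * R23)
          * ((2:ℝ) ^ (2 * R12) * (2:ℝ) ^ (2 * R32) / (2:ℝ) ^ (2 * R23) - 1)
          = (2:ℝ) ^ (2 * R12) * (2:ℝ) ^ (2 * R13) * (2:ℝ) ^ (2 * R32)
            - (2:ℝ) ^ (2 * R13) * (2:ℝ) ^ (2 * R23) := by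
        field_simp
      rw [expand]
      have p6 : (1:ℝ) ≤ (2:ℝ) ^ (2 * R13) * (2:ℝ) ^ (2 * R23) := by nlinarith only [o13, o23]
      linarith only [B3, p6, mul_le_mul_of_nonneg_right hh23 hP.le, hX2.le]
    linarith only [t1, t2]
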